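/- Let K ≥ 1 and let L₁, …, L_K : ℝ^d → ℝ be twice continuously differentiable with constants G_min > 0 and L ≥ 0 such that ‖∇L_i(θ)‖₂ ≥ G_min and ‖∇²L_i(θ)‖ ≤ L for all i and θ. Set L₁* = L/G_min and n_i(θ) = ∇L_i(θ)/‖∇L_i(θ)‖₂. Fix θ₀ ∈ ℝ^d, γ > 0, and an index sequence s₁, …, s_K ∈ {1,…,K}, and define θ_m = θ_{m−1} − γ·n_{s_m}(θ_{m−1}) for m ≥ 1 with θ_0 = θ₀. Then for every m with 0 ≤ m ≤ K: (i) ‖θ_m − θ₀‖₂ ≤ m·γ, and (ii) ‖θ_m − θ₀ + γ·Σ_{l=1}^{m} n_{s_l}(θ₀)‖₂ ≤ (L₁*/2)·m(m−1)·γ². -/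

import Mathlib

open scoped RealInnerProductSpace

lemma nexus_normalize_lip {E : Type*} [NormedAddCommGroup E] [InnerProductSpace ℝ E]
    (a b : E) (G : ℝ) (hG : 0 < G) (ha : G ≤ ‖a‖) (hb : G ≤ ‖b‖) :
    ‖‖a‖⁻¹ • a - ‖b‖⁻¹ • b‖ ≤ ‖a - b‖ / G := by
  have ha0 : (0:ℝ) < ‖a‖ := lt_of_lt_of_le hG ha
  have hb0 : (0:ℝ) < ‖b‖ := lt_of_lt_of_le hG hb
  have key : ‖‖a‖⁻¹ • a - ‖b‖⁻¹ • b‖ ^ 2 * (‖a‖ * ‖b‖) ≤ ‖a - b‖ ^ 2 := by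
    have h1 : ‖‖a‖⁻¹ • a - ‖b‖⁻¹ • b‖ ^ 2 =
        2 - 2 * (‖a‖⁻¹ * ‖b‖⁻¹ * ⟪a, b⟫) := by
      rw [@norm_sub_sq_real, norm_smul, norm_smul, real_inner_smul_left, real_inner_smul_right]
      simp [abs_of_pos, ha0, hb0, inv_mul_cancel₀ ha0.ne', inv_mul_cancel₀ hb0.ne']
      ring
    have h2 : ‖a - b‖ ^ 2 = ‖a‖ ^ 2 + ‖b‖ ^ 2 - 2 * ⟪a, b⟫ := by
      rw [@norm_sub_sq_real]; ring
    have habs := abs_real_inner_le_norm a b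
    have hlow : -(‖a‖ * ‖b‖) ≤ ⟪a, b⟫ := neg_le_of_abs_le habs
    have h1' : ‖‖a‖⁻¹ • a - ‖b‖⁻¹ • b‖ ^ 2 * (‖a‖ * ‖b‖)
        = 2 * (‖a‖ * ‖b‖) - 2 * ⟪a, b⟫ := by
      rw [h1]; field_simp
    rw [h1', h2]
    nlinarith [sq_nonneg (‖a‖ - ‖b‖)]
  have hGG : G * G ≤ ‖a‖ * ‖b‖ := mul_le_mul ha hb hG.le ha0.le
  have hn : 0 ≤ ‖‖a‖⁻¹ • a - ‖b‖⁻¹ • b‖ := norm_nonneg _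
  rw [le_div_iff₀ hG]
  nlinarith [norm_nonneg (a - b), sq_nonneg (‖‖a‖⁻¹ • a - ‖b‖⁻¹ • b‖)]

lemma nexus_grad_lip {d : ℕ} (f : EuclideanSpace ℝ (Fin d) → ℝ) (hf : ContDiff ℝ 2 f)
    (Lc : ℝ) (hH : ∀ θ, ‖fderiv ℝ (gradient f) θ‖ ≤ Lc)
    (x y : EuclideanSpace ℝ (Fin d)) :
    ‖gradient f x - gradient f y‖ ≤ Lc * ‖x - y‖ := by
  have hdf : Differentiable ℝ (gradient f) := by
    have h1 : ContDiff ℝ 1 (fun x => fderiv ℝ f x) :=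
      hf.fderiv_right (m := 1) (by norm_num)
    have : gradient f = fun x =>
        (LinearIsometryEquiv.symm (InnerProductSpace.toDual ℝ _)) (fderiv ℝ f x) := rfl
    rw [this]
    exact ((InnerProductSpace.toDual ℝ _).symm.toContinuousLinearEquiv.differentiable).comp
      (h1.differentiable one_ne_zero)
  have := Convex.norm_image_sub_le_of_norm_fderiv_le
    (f := gradient f) (s := Set.univ) (fun z _ => hdf z)
    (fun z _ => hH z) convex_univ (Set.mem_univ y) (Set.mem_univ x)
  simpa using this

/-- The Normalized SGD inner trajectory of the Nexus algorithm:
`θ_0 = θ₀` and `θ_{m+1} = θ_m - γ ∇L_{s_m}(θ_m)/‖∇L_{s_m}(θ_m)‖`. -/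
noncomputable def nexusTraj {d K : ℕ} (L : Fin K → EuclideanSpace ℝ (Fin d) → ℝ)
    (γ : ℝ) (θ0 : EuclideanSpace ℝ (Fin d)) (s : ℕ → Fin K) :
    ℕ → EuclideanSpace ℝ (Fin d)
  | 0 => θ0
  | m + 1 =>
      nexusTraj L γ θ0 s m -
        γ • (‖gradient (L (s m)) (nexusTraj L γ θ0 s m)‖⁻¹ •
          gradient (L (s m)) (nexusTraj L γ θ0 s m))

/-- **Displacement bounds for the Nexus inner trajectory.** Under a gradient norm lower
bound `G_min` and Hessian norm bound `L`, for each `m ≤ K`: (i) the trajectory moves at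
most `m γ` from its start, and (ii) it deviates from the idealized displacement (with all
normalized gradients frozen at `θ₀`) by at most `(L/G_min)/2 · m(m-1) γ²`. -/
theorem nexusTraj_displacement_bounds {d K : ℕ} (hK : 1 ≤ K)
    (L : Fin K → EuclideanSpace ℝ (Fin d) → ℝ)
    (hL : ∀ i, ContDiff ℝ 2 (L i))
    (Gmin Lc : ℝ) (hGmin : 0 < Gmin) (hLc : 0 ≤ Lc)
    (hgrad : ∀ i θ, Gmin ≤ ‖gradient (L i) θ‖)
    (hHess : ∀ i θ, ‖fderiv ℝ (gradient (L i)) θ‖ ≤ Lc)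
    (θ0 : EuclideanSpace ℝ (Fin d)) (γ : ℝ) (hγ : 0 < γ)
    (s : ℕ → Fin K) (m : ℕ) (hm : m ≤ K) :
    ‖nexusTraj L γ θ0 s m - θ0‖ ≤ m * γ
    ∧ ‖nexusTraj L γ θ0 s m - θ0 +
          γ • ∑ l ∈ Finset.range m,
            ‖gradient (L (s l)) θ0‖⁻¹ • gradient (L (s l)) θ0‖
        ≤ (Lc / Gmin) / 2 * (m * (m - 1)) * γ ^ 2 := by
  -- unit norm of normalized gradients
  have hunit : ∀ (i : Fin K) (θ : EuclideanSpace ℝ (Fin d)),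
      ‖‖gradient (L i) θ‖⁻¹ • gradient (L i) θ‖ = 1 := by
    intro i θ
    have h0 : (0:ℝ) < ‖gradient (L i) θ‖ := lt_of_lt_of_le hGmin (hgrad i θ)
    rw [norm_smul, norm_inv, norm_norm, inv_mul_cancel₀ h0.ne']
  induction m with
  | zero => simp [nexusTraj]
  | succ m ih =>
    obtain ⟨ih1, ih2⟩ := ih (Nat.le_of_succ_le hm)
    set θm := nexusTraj L γ θ0 s m with hθm
    set g := gradient (L (s m)) θm with hg
    set n := ‖g‖⁻¹ • g with hn
    set n0 : Fin K → EuclideanSpace ℝ (Fin d) :=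
      fun i => ‖gradient (L i) θ0‖⁻¹ • gradient (L i) θ0 with hn0
    have hstep : nexusTraj L γ θ0 s (m + 1) = θm - γ • n := rfl
    have hnorm_n : ‖n‖ = 1 := hunit (s m) θm
    constructor
    · -- part (i)
      have : nexusTraj L γ θ0 s (m + 1) - θ0 = (θm - θ0) - γ • n := by
        rw [hstep]; abel
      rw [this]
      calc ‖(θm - θ0) - γ • n‖ ≤ ‖θm - θ0‖ + ‖γ • n‖ := norm_sub_le _ _
        _ ≤ m * γ + γ := by
            rw [norm_smul, hnorm_n, mul_one, Real.norm_eq_abs, abs_of_pos hγ]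
            linarith
        _ = (m + 1 : ℕ) * γ := by push_cast; ring
    · -- part (ii)
      have halg : nexusTraj L γ θ0 s (m + 1) - θ0 +
          γ • ∑ l ∈ Finset.range (m + 1), n0 (s l)
          = (θm - θ0 + γ • ∑ l ∈ Finset.range m, n0 (s l)) + γ • (n0 (s m) - n) := by
        rw [hstep, Finset.sum_range_succ, smul_add, smul_sub]
        abel
      have hdev : ‖n0 (s m) - n‖ ≤ Lc / Gmin * ‖θm - θ0‖ := by
        have h1 : ‖n0 (s m) - n‖ ≤ ‖gradient (L (s m)) θ0 - g‖ / Gmin :=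
          nexus_normalize_lip _ _ Gmin hGmin (hgrad _ _) (hgrad _ _)
        have h2 : ‖gradient (L (s m)) θ0 - g‖ ≤ Lc * ‖θ0 - θm‖ :=
          nexus_grad_lip (L (s m)) (hL (s m)) Lc (hHess (s m)) θ0 θm
        have h3 : ‖θ0 - θm‖ = ‖θm - θ0‖ := norm_sub_rev _ _
        calc ‖n0 (s m) - n‖ ≤ ‖gradient (L (s m)) θ0 - g‖ / Gmin := h1
          _ ≤ Lc * ‖θm - θ0‖ / Gmin := by
              have h2' : ‖gradient (L (s m)) θ0 - g‖ ≤ Lc * ‖θm - θ0‖ := by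
                rw [← h3]; exact h2
              gcongr
          _ = Lc / Gmin * ‖θm - θ0‖ := by ring
      rw [halg]
      have hC : 0 ≤ Lc / Gmin := div_nonneg hLc hGmin.le
      calc ‖(θm - θ0 + γ • ∑ l ∈ Finset.range m, n0 (s l)) + γ • (n0 (s m) - n)‖
          ≤ ‖θm - θ0 + γ • ∑ l ∈ Finset.range m, n0 (s l)‖ + ‖γ • (n0 (s m) - n)‖ :=
            norm_add_le _ _
        _ ≤ (Lc / Gmin) / 2 * (m * (m - 1)) * γ ^ 2 + γ * (Lc / Gmin * (m * γ)) := by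
            rw [norm_smul, Real.norm_eq_abs, abs_of_pos hγ]
            have : ‖n0 (s m) - n‖ ≤ Lc / Gmin * (m * γ) :=
              hdev.trans (by
                apply mul_le_mul_of_nonneg_left ih1 hC)
            have := mul_le_mul_of_nonneg_left this hγ.le
            linarith [ih2]
        _ ≤ (Lc / Gmin) / 2 * ((m + 1 : ℕ) * ((m + 1 : ℕ) - 1)) * γ ^ 2 := by
            push_cast
            nlinarith [sq_nonneg γ]
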